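/- In the concrete quasi-free CAR model with past P = {n ∈ ℤ : n < 0} and future F = {n ∈ ℤ : n ≥ 0}: assume there is ε ∈ (0,1/2) with ε ≤ λ_l ≤ 1−ε and λ_l ≠ 1/2 for all l ∈ ℤ. If ξ ∈ H satisfies the l-th intertwining equations for every l ∈ F, then ξ belongs to the closed linear span of the set {e_{(A,B)} : A ⊆ P, B ⊆ P finite, card A ≡ card B (mod 2)}. -/

import Mathlib

/- The concrete quasi-free CAR model: `H = ℓ²(Finset ℤ × Finset ℤ)` with orthonormal basis
`e (A, B)`, vacuum `Ω = e (∅, ∅)`, and operators `a l`, `b l`, `G` given on the basis by the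
quasi-free formulas with symbol `λ` (diagonal, `R h_l = λ_l h_l`). -/

noncomputable section

/-- The GNS Hilbert space: `ℓ²` over pairs of finite subsets of `ℤ`. -/
abbrev CARSpace := lp (fun _ : Finset ℤ × Finset ℤ => ℂ) 2

/-- The orthonormal basis vector `e_{(A,B)}`. -/
def carE (p : Finset ℤ × Finset ℤ) : CARSpace := lp.single 2 p 1

/-- The vacuum vector `Ω = e_{(∅,∅)}`. -/
def carΩ : CARSpace := carE (∅, ∅)

/-- `n(l, X)` = number of elements of `X` strictly below `l`. -/
def nlt (l : ℤ) (X : Finset ℤ) : ℕ := (X.filter fun j => j < l).card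

/-- `a` is the family of quasi-free annihilation-type operators `a_l = π_R(a(h_l))`:
`a_l e_{(A,B)} = √(1−λ_l)·(−1)^{|B|}·(−1)^{n(l,A)}·[l ∉ A]·e_{(A∪{l},B)}
              + √(λ_l)·(−1)^{n(l,B)}·[l ∈ B]·e_{(A,B∖{l})}`. -/
def IsCAR_a (lam : ℤ → ℝ) (a : ℤ → CARSpace →L[ℂ] CARSpace) : Prop :=
  ∀ (l : ℤ) (A B : Finset ℤ),
    a l (carE (A, B)) =
      ((Real.sqrt (1 - lam l) : ℂ) * (-1) ^ B.card * (-1) ^ nlt l A *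
          (if l ∈ A then 0 else 1)) • carE (insert l A, B) +
      ((Real.sqrt (lam l) : ℂ) * (-1) ^ nlt l B *
          (if l ∈ B then 1 else 0)) • carE (A, B.erase l)

/-- `b` is the family of commutant quasi-free operators:
`b_l e_{(A,B)} = √(λ_l)·(−1)^{|B|}·(−1)^{n(l,A)}·[l ∉ A]·e_{(A∪{l},B)}
              − √(1−λ_l)·(−1)^{n(l,B)}·[l ∈ B]·e_{(A,B∖{l})}`. -/
def IsCAR_b (lam : ℤ → ℝ) (b : ℤ → CARSpace →L[ℂ] CARSpace) : Prop :=
  ∀ (l : ℤ) (A B : Finset ℤ),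
    b l (carE (A, B)) =
      ((Real.sqrt (lam l) : ℂ) * (-1) ^ B.card * (-1) ^ nlt l A *
          (if l ∈ A then 0 else 1)) • carE (insert l A, B) -
      ((Real.sqrt (1 - lam l) : ℂ) * (-1) ^ nlt l B *
          (if l ∈ B then 1 else 0)) • carE (A, B.erase l)

/-- `G = Γ⊗Γ` : `G e_{(A,B)} = (−1)^{|A|+|B|} e_{(A,B)}`. -/
def IsCAR_G (G : CARSpace →L[ℂ] CARSpace) : Prop :=
  ∀ (A B : Finset ℤ), G (carE (A, B)) = ((-1 : ℂ) ^ (A.card + B.card)) • carE (A, B)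

/-- `ξ` satisfies the `l`-th intertwining equations:
`(1−λ_l)^{−1/2}·(a_l ξ) = −λ_l^{−1/2}·G(b_l ξ)` and
`λ_l^{−1/2}·(a_l* ξ) = −(1−λ_l)^{−1/2}·b_l*(G ξ)`. -/
def IntertwinesAt (lam : ℤ → ℝ) (a b : ℤ → CARSpace →L[ℂ] CARSpace)
    (G : CARSpace →L[ℂ] CARSpace) (l : ℤ) (ξ : CARSpace) : Prop :=
  (Real.sqrt (1 - lam l) : ℂ)⁻¹ • a l ξ = -((Real.sqrt (lam l) : ℂ)⁻¹) • G (b l ξ) ∧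
  (Real.sqrt (lam l) : ℂ)⁻¹ • (star (a l)) ξ =
    -((Real.sqrt (1 - lam l) : ℂ)⁻¹) • (star (b l)) (G ξ)

/-- The "past" subspace: closed linear span of the `e_{(A,B)}` with `A, B ⊆ P = {n < 0}`
and `card A ≡ card B (mod 2)`. -/
def pastSpan : Set CARSpace :=
  closure (Submodule.span ℂ
    {v : CARSpace | ∃ A B : Finset ℤ,
      (∀ n ∈ A, n < 0) ∧ (∀ n ∈ B, n < 0) ∧ A.card % 2 = B.card % 2 ∧ v = carE (A, B)} :
    Set CARSpace)



section CARAux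

set_option linter.unusedSectionVars false



local notation "⟪" x ", " y "⟫" => @inner ℂ _ _ x y

lemma carE_apply (p q : Finset ℤ × Finset ℤ) : carE p q = if q = p then 1 else 0 := by
  rcases eq_or_ne q p with h | h
  · subst h; simp [carE, lp.single_apply_self]
  · simp [carE, lp.single_apply_ne _ _ _ h, h]

lemma inner_carE_left (q : Finset ℤ × Finset ℤ) (ξ : CARSpace) : ⟪carE q, ξ⟫ = ξ q := by
  rw [carE, lp.inner_single_left]
  simp

example : CompleteSpace CARSpace := by infer_instance

lemma coord_T (T : CARSpace →L[ℂ] CARSpace) (ξ : CARSpace) (q : Finset ℤ × Finset ℤ) :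
    (T ξ) q = ⟪(star T) (carE q), ξ⟫ := by
  rw [← inner_carE_left, ContinuousLinearMap.star_eq_adjoint,
    ContinuousLinearMap.adjoint_inner_left]

lemma coord_starT (T : CARSpace →L[ℂ] CARSpace) (ξ : CARSpace) (q : Finset ℤ × Finset ℤ) :
    ((star T) ξ) q = ⟪T (carE q), ξ⟫ := by
  rw [← inner_carE_left, ContinuousLinearMap.star_eq_adjoint,
    ContinuousLinearMap.adjoint_inner_right]

lemma nlt_insert (l : ℤ) (X : Finset ℤ) : nlt l (insert l X) = nlt l X := by
  simp [nlt, Finset.filter_insert]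

lemma nlt_erase (l : ℤ) (X : Finset ℤ) : nlt l (X.erase l) = nlt l X := by
  unfold nlt
  rw [Finset.filter_erase, Finset.erase_eq_of_notMem]
  simp

lemma insert_eq_iff'' {l : ℤ} {A' A : Finset ℤ} (h : l ∉ A') :
    (insert l A' = A) ↔ (l ∈ A ∧ A' = A.erase l) := by
  constructor
  · rintro rfl; exact ⟨Finset.mem_insert_self _ _, (Finset.erase_insert h).symm⟩
  · rintro ⟨h1, rfl⟩; exact Finset.insert_erase h1

lemma erase_eq_iff'' {l : ℤ} {B' B : Finset ℤ} (h : l ∈ B') :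
    (B'.erase l = B) ↔ (l ∉ B ∧ B' = insert l B) := by
  constructor
  · rintro rfl; exact ⟨Finset.notMem_erase _ _, (Finset.insert_erase h).symm⟩
  · rintro ⟨h1, rfl⟩; exact Finset.erase_insert h1

lemma star_carE_eq (T : CARSpace →L[ℂ] CARSpace) (p : Finset ℤ × Finset ℤ) (v : CARSpace)
    (h : ∀ q, ⟪T (carE q), carE p⟫ = v q) : (star T) (carE p) = v := by
  apply lp.ext
  funext q
  rw [← h q, ← coord_starT]

lemma astar_e {lam : ℤ → ℝ} {a : ℤ → CARSpace →L[ℂ] CARSpace} (ha : IsCAR_a lam a)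
    (l : ℤ) (A B : Finset ℤ) :
    (star (a l)) (carE (A, B)) =
      ((Real.sqrt (1 - lam l) : ℂ) * (-1) ^ B.card * (-1) ^ nlt l A *
          (if l ∈ A then 1 else 0)) • carE (A.erase l, B) +
      ((Real.sqrt (lam l) : ℂ) * (-1) ^ nlt l B *
          (if l ∈ B then 0 else 1)) • carE (A, insert l B) := by
  refine star_carE_eq _ _ _ (fun q => ?_)
  obtain ⟨A', B'⟩ := q
  rw [ha l A' B']
  simp only [inner_add_left, inner_smul_left, inner_carE_left, carE_apply, lp.coeFn_add,
    Pi.add_apply, lp.coeFn_smul, Pi.smul_apply, smul_eq_mul, map_mul, map_pow, map_neg, map_one,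
    Complex.conj_ofReal, apply_ite (starRingEnd ℂ), map_zero, Prod.mk.injEq, starRingEnd_apply]
  by_cases h1 : l ∈ A' <;> by_cases h2 : l ∈ B' <;> by_cases h3 : l ∈ A <;> by_cases h4 : l ∈ B <;>
    simp_all [insert_eq_iff'', erase_eq_iff''] <;>
      first
      | (split_ifs <;> simp_all [nlt_insert, nlt_erase])
      | (rintro rfl rfl; simp_all)

lemma bstar_e {lam : ℤ → ℝ} {b : ℤ → CARSpace →L[ℂ] CARSpace} (hb : IsCAR_b lam b)
    (l : ℤ) (A B : Finset ℤ) :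
    (star (b l)) (carE (A, B)) =
      ((Real.sqrt (lam l) : ℂ) * (-1) ^ B.card * (-1) ^ nlt l A *
          (if l ∈ A then 1 else 0)) • carE (A.erase l, B) -
      ((Real.sqrt (1 - lam l) : ℂ) * (-1) ^ nlt l B *
          (if l ∈ B then 0 else 1)) • carE (A, insert l B) := by
  refine star_carE_eq _ _ _ (fun q => ?_)
  obtain ⟨A', B'⟩ := q
  rw [hb l A' B']
  simp only [inner_sub_left, inner_smul_left, inner_carE_left, carE_apply, lp.coeFn_sub,
    Pi.sub_apply, lp.coeFn_smul, Pi.smul_apply, smul_eq_mul, map_mul, map_pow, map_neg, map_one,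
    Complex.conj_ofReal, apply_ite (starRingEnd ℂ), map_zero, Prod.mk.injEq, starRingEnd_apply]
  by_cases h1 : l ∈ A' <;> by_cases h2 : l ∈ B' <;> by_cases h3 : l ∈ A <;> by_cases h4 : l ∈ B <;>
    simp_all [insert_eq_iff'', erase_eq_iff''] <;>
      first
      | (split_ifs <;> simp_all [nlt_insert, nlt_erase])
      | (rintro rfl rfl; simp_all)

lemma Gstar_e {G : CARSpace →L[ℂ] CARSpace} (hG : IsCAR_G G) (A B : Finset ℤ) :
    (star G) (carE (A, B)) = ((-1 : ℂ) ^ (A.card + B.card)) • carE (A, B) := by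
  refine star_carE_eq _ _ _ (fun q => ?_)
  obtain ⟨A', B'⟩ := q
  rw [hG A' B']
  simp only [inner_smul_left, inner_carE_left, carE_apply, lp.coeFn_smul, Pi.smul_apply,
    smul_eq_mul, map_pow, map_neg, map_one, Prod.mk.injEq, starRingEnd_apply]
  split_ifs <;> simp_all

section coords
variable {lam : ℤ → ℝ} {a b : ℤ → CARSpace →L[ℂ] CARSpace} {G : CARSpace →L[ℂ] CARSpace}
variable (ξ : CARSpace)

lemma coord_aξ (ha : IsCAR_a lam a) (l : ℤ) (A B : Finset ℤ) :
    (a l ξ) (A, B) =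
      ((Real.sqrt (1 - lam l) : ℂ) * (-1) ^ B.card * (-1) ^ nlt l A *
          (if l ∈ A then 1 else 0)) * ξ (A.erase l, B) +
      ((Real.sqrt (lam l) : ℂ) * (-1) ^ nlt l B *
          (if l ∈ B then 0 else 1)) * ξ (A, insert l B) := by
  rw [coord_T, astar_e ha]
  simp only [inner_add_left, inner_smul_left, inner_carE_left, map_mul, map_pow, map_neg,
    map_one, Complex.conj_ofReal, apply_ite (starRingEnd ℂ), map_zero, Complex.star_def, Complex.conj_ofReal]

lemma coord_bξ (hb : IsCAR_b lam b) (l : ℤ) (A B : Finset ℤ) :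
    (b l ξ) (A, B) =
      ((Real.sqrt (lam l) : ℂ) * (-1) ^ B.card * (-1) ^ nlt l A *
          (if l ∈ A then 1 else 0)) * ξ (A.erase l, B) -
      ((Real.sqrt (1 - lam l) : ℂ) * (-1) ^ nlt l B *
          (if l ∈ B then 0 else 1)) * ξ (A, insert l B) := by
  rw [coord_T, bstar_e hb]
  simp only [inner_sub_left, inner_smul_left, inner_carE_left, map_mul, map_pow, map_neg,
    map_one, Complex.conj_ofReal, apply_ite (starRingEnd ℂ), map_zero, Complex.star_def, Complex.conj_ofReal]

lemma coord_staraξ (ha : IsCAR_a lam a) (l : ℤ) (A B : Finset ℤ) :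
    ((star (a l)) ξ) (A, B) =
      ((Real.sqrt (1 - lam l) : ℂ) * (-1) ^ B.card * (-1) ^ nlt l A *
          (if l ∈ A then 0 else 1)) * ξ (insert l A, B) +
      ((Real.sqrt (lam l) : ℂ) * (-1) ^ nlt l B *
          (if l ∈ B then 1 else 0)) * ξ (A, B.erase l) := by
  rw [coord_starT, ha l A B]
  simp only [inner_add_left, inner_smul_left, inner_carE_left, map_mul, map_pow, map_neg,
    map_one, Complex.conj_ofReal, apply_ite (starRingEnd ℂ), map_zero, map_one, Complex.star_def, Complex.conj_ofReal]

lemma coord_starbξ (hb : IsCAR_b lam b) (l : ℤ) (A B : Finset ℤ) :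
    ((star (b l)) ξ) (A, B) =
      ((Real.sqrt (lam l) : ℂ) * (-1) ^ B.card * (-1) ^ nlt l A *
          (if l ∈ A then 0 else 1)) * ξ (insert l A, B) -
      ((Real.sqrt (1 - lam l) : ℂ) * (-1) ^ nlt l B *
          (if l ∈ B then 1 else 0)) * ξ (A, B.erase l) := by
  rw [coord_starT, hb l A B]
  simp only [inner_sub_left, inner_smul_left, inner_carE_left, map_mul, map_pow, map_neg,
    map_one, Complex.conj_ofReal, apply_ite (starRingEnd ℂ), map_zero, Complex.star_def, Complex.conj_ofReal]

lemma coord_Gξ (hG : IsCAR_G G) (A B : Finset ℤ) :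
    (G ξ) (A, B) = (-1 : ℂ) ^ (A.card + B.card) * ξ (A, B) := by
  rw [coord_T, Gstar_e hG]
  simp only [inner_smul_left, inner_carE_left, map_pow, map_neg, map_one, Complex.star_def, Complex.conj_ofReal]

end coords

lemma unit_cancel {σ X u : ℂ} (hσ : σ ≠ 0) (hX : X ≠ 0) (h : σ * X * u = 0) : u = 0 := by
  rcases mul_eq_zero.1 h with h' | h'
  · exact absurd h' (mul_ne_zero hσ hX)
  · exact h'

lemma sign_ne (n m : ℕ) : ((-1 : ℂ)) ^ n * ((-1 : ℂ)) ^ m ≠ 0 := by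
  simp [pow_ne_zero]

lemma X_ne {s t : ℝ} (hs : 0 < s) (ht : 0 < t) (hne : s ≠ t) (n : ℕ) :
    ((s : ℂ))⁻¹ * (t : ℂ) + (-1 : ℂ) ^ n * (((t : ℂ))⁻¹ * (s : ℂ)) ≠ 0 := by
  have hs0 : (s : ℂ) ≠ 0 := by exact_mod_cast hs.ne'
  have ht0 : (t : ℂ) ≠ 0 := by exact_mod_cast ht.ne'
  rcases Nat.even_or_odd n with h | h
  · rw [h.neg_one_pow]
    have : ((s : ℂ))⁻¹ * (t : ℂ) + 1 * (((t : ℂ))⁻¹ * (s : ℂ)) = (((s⁻¹ * t + t⁻¹ * s : ℝ)) : ℂ) := by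
      push_cast; ring
    rw [this]
    have : 0 < s⁻¹ * t + t⁻¹ * s := by positivity
    exact_mod_cast this.ne'
  · rw [h.neg_one_pow]
    have : ((s : ℂ))⁻¹ * (t : ℂ) + (-1) * (((t : ℂ))⁻¹ * (s : ℂ))
        = (((s⁻¹ * t - t⁻¹ * s : ℝ)) : ℂ) := by push_cast; ring
    rw [this]
    have hne2 : s⁻¹ * t - t⁻¹ * s ≠ 0 := by
      intro hc
      apply hne
      have h1 : s⁻¹ * t = t⁻¹ * s := by linarith
      have h2 : t * t = s * s := by
        field_simp at h1
        linarith [h1]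
      nlinarith
    exact_mod_cast hne2


lemma sqrt_facts {lam : ℤ → ℝ} {ε : ℝ} (hε : 0 < ε ∧ ε < 1 / 2)
    (hlam : ∀ l : ℤ, ε ≤ lam l ∧ lam l ≤ 1 - ε ∧ lam l ≠ 1 / 2) (l : ℤ) :
    0 < Real.sqrt (lam l) ∧ 0 < Real.sqrt (1 - lam l) ∧
    Real.sqrt (lam l) ≠ Real.sqrt (1 - lam l) := by
  obtain ⟨h1, h2, h3⟩ := hlam l
  have hp : 0 < lam l := hε.1.trans_le h1
  have hq : lam l < 1 := by linarith [hε.2]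
  refine ⟨Real.sqrt_pos.2 hp, Real.sqrt_pos.2 (by linarith), ?_⟩
  intro hc
  apply h3
  have := congrArg (fun x => x ^ 2) hc
  simp only [Real.sq_sqrt hp.le, Real.sq_sqrt (by linarith : (0:ℝ) ≤ 1 - lam l)] at this
  linarith

section main
variable {lam : ℤ → ℝ} {ε : ℝ} (hε : 0 < ε ∧ ε < 1 / 2)
  (hlam : ∀ l : ℤ, ε ≤ lam l ∧ lam l ≤ 1 - ε ∧ lam l ≠ 1 / 2)
  {a b : ℤ → CARSpace →L[ℂ] CARSpace} {G : CARSpace →L[ℂ] CARSpace}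
  (ha : IsCAR_a lam a) (hb : IsCAR_b lam b) (hG : IsCAR_G G)
  {ξ : CARSpace} (hξ : ∀ l : ℤ, 0 ≤ l → IntertwinesAt lam a b G l ξ)

include hε hlam ha hb hG hξ in
lemma Z1 (l : ℤ) (hl : 0 ≤ l) (A B : Finset ℤ) (hA : l ∉ A) (hB : l ∉ B) :
    ξ (insert l A, B) = 0 := by
  obtain ⟨hs, ht, hst⟩ := sqrt_facts hε hlam l
  have h := congrArg (fun v : CARSpace => (v : ∀ p : Finset ℤ × Finset ℤ, ℂ) (A, B)) (hξ l hl).2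
  simp only [lp.coeFn_smul, Pi.smul_apply, smul_eq_mul, lp.coeFn_neg, Pi.neg_apply] at h
  rw [coord_staraξ _ ha, coord_starbξ _ hb, coord_Gξ _ hG, coord_Gξ _ hG,
    if_neg hA, if_neg hB] at h
  rw [Finset.card_insert_of_notMem hA] at h
  refine unit_cancel (σ := (-1) ^ B.card * (-1) ^ nlt l A) (sign_ne _ _)
    (X_ne hs ht hst (A.card + 1 + B.card)) ?_
  linear_combination h

include hε hlam ha hb hG hξ in
lemma Z2 (l : ℤ) (hl : 0 ≤ l) (A B : Finset ℤ) (hA : l ∉ A) (hB : l ∉ B) :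
    ξ (A, insert l B) = 0 := by
  obtain ⟨hs, ht, hst⟩ := sqrt_facts hε hlam l
  have h := congrArg (fun v : CARSpace => (v : ∀ p : Finset ℤ × Finset ℤ, ℂ) (A, B)) (hξ l hl).1
  simp only [lp.coeFn_smul, Pi.smul_apply, smul_eq_mul, lp.coeFn_neg, Pi.neg_apply] at h
  rw [coord_aξ _ ha, coord_Gξ _ hG, coord_bξ _ hb, if_neg hA, if_neg hB] at h
  have hσ : ((-1 : ℂ)) ^ nlt l B ≠ 0 := pow_ne_zero _ (by norm_num)
  refine unit_cancel (σ := (-1) ^ nlt l B) hσ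
    (X_ne ht hs (Ne.symm hst) (A.card + B.card + 1)) ?_
  linear_combination h

include hε hlam ha hb hG hξ in
lemma Z3 (l : ℤ) (hl : 0 ≤ l) (A B : Finset ℤ) (hA : l ∉ A) (hB : l ∉ B)
    (hpar : (A.card + B.card) % 2 = 0) :
    ξ (insert l A, insert l B) = 0 := by
  obtain ⟨hs, ht, hst⟩ := sqrt_facts hε hlam l
  have h := congrArg (fun v : CARSpace =>
    (v : ∀ p : Finset ℤ × Finset ℤ, ℂ) (A, insert l B)) (hξ l hl).2
  simp only [lp.coeFn_smul, Pi.smul_apply, smul_eq_mul, lp.coeFn_neg, Pi.neg_apply] at h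
  rw [coord_staraξ _ ha, coord_starbξ _ hb, coord_Gξ _ hG, coord_Gξ _ hG,
    if_neg hA, if_pos (Finset.mem_insert_self l B), Finset.erase_insert hB,
    Finset.card_insert_of_notMem hA, Finset.card_insert_of_notMem hB, nlt_insert] at h
  have he1 : ((-1 : ℂ)) ^ (A.card + 1 + (B.card + 1)) = 1 :=
    Even.neg_one_pow (Nat.even_iff.2 (by omega))
  have he2 : ((-1 : ℂ)) ^ (A.card + B.card) = 1 :=
    Even.neg_one_pow (Nat.even_iff.2 (by omega))
  rw [he1, he2] at h
  have hs0 : ((Real.sqrt (lam l) : ℝ) : ℂ) ≠ 0 := by exact_mod_cast hs.ne'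
  have ht0 : ((Real.sqrt (1 - lam l) : ℝ) : ℂ) ≠ 0 := by exact_mod_cast ht.ne'
  field_simp at h
  have hX : ((Real.sqrt (1 - lam l) * Real.sqrt (1 - lam l) +
      Real.sqrt (lam l) * Real.sqrt (lam l) : ℝ) : ℂ) ≠ 0 := by
    have h0 : (0:ℝ) < Real.sqrt (1 - lam l) * Real.sqrt (1 - lam l) +
        Real.sqrt (lam l) * Real.sqrt (lam l) := by positivity
    exact_mod_cast h0.ne'
  refine unit_cancel (σ := (-1) ^ (B.card + 1) * (-1) ^ nlt l A) (sign_ne _ _) hX ?_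
  push_cast
  linear_combination h

include hε hlam ha hb hG hξ in
lemma RelIneq (l : ℤ) (hl : 0 ≤ l) (A B : Finset ℤ) (hA : l ∉ A) (hB : l ∉ B)
    (hpar : (A.card + B.card) % 2 = 1) :
    2 * ε * ‖ξ (A, B)‖ ≤ ‖ξ (insert l A, insert l B)‖ := by
  obtain ⟨hs, ht, hst⟩ := sqrt_facts hε hlam l
  obtain ⟨hl1, hl2, _⟩ := hlam l
  have h := congrArg (fun v : CARSpace =>
    (v : ∀ p : Finset ℤ × Finset ℤ, ℂ) (insert l A, B)) (hξ l hl).1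
  simp only [lp.coeFn_smul, Pi.smul_apply, smul_eq_mul, lp.coeFn_neg, Pi.neg_apply] at h
  rw [coord_aξ _ ha, coord_Gξ _ hG, coord_bξ _ hb, if_pos (Finset.mem_insert_self l A),
    if_neg hB, Finset.erase_insert hA, nlt_insert, Finset.card_insert_of_notMem hA] at h
  have he1 : ((-1 : ℂ)) ^ (A.card + 1 + B.card) = 1 :=
    Even.neg_one_pow (Nat.even_iff.2 (by omega))
  rw [he1] at h
  have hs0 : ((Real.sqrt (lam l) : ℝ) : ℂ) ≠ 0 := by exact_mod_cast hs.ne'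
  have ht0 : ((Real.sqrt (1 - lam l) : ℝ) : ℂ) ≠ 0 := by exact_mod_cast ht.ne'
  field_simp at h
  set s' := Real.sqrt (lam l)
  set t' := Real.sqrt (1 - lam l)
  have key : ((2 * s' * t' : ℝ) : ℂ) * ((-1) ^ B.card * (-1) ^ nlt l A) * ξ (A, B)
      = ((t' * t' - s' * s' : ℝ) : ℂ) * ((-1) ^ nlt l B) * ξ (insert l A, insert l B) := by
    push_cast
    linear_combination h
  have habs := congrArg norm key
  simp only [norm_mul, norm_pow, norm_neg, norm_one, Complex.norm_real, Real.norm_eq_abs, one_pow,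
    mul_one, one_mul] at habs
  have hlam0 : (0:ℝ) ≤ lam l := le_trans hε.1.le hl1
  have hlam1 : lam l ≤ 1 := by linarith [hε.2]
  have hss : s' * s' = lam l := Real.mul_self_sqrt hlam0
  have htt : t' * t' = 1 - lam l := Real.mul_self_sqrt (by linarith)
  have hst_ge : ε ≤ s' * t' := by
    have h1 : Real.sqrt ε ≤ s' := Real.sqrt_le_sqrt hl1
    have h2 : Real.sqrt ε ≤ t' := Real.sqrt_le_sqrt (by linarith)
    calc ε = Real.sqrt ε * Real.sqrt ε := (Real.mul_self_sqrt hε.1.le).symm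
    _ ≤ s' * t' := by
        have := Real.sqrt_nonneg ε
        exact mul_le_mul h1 h2 this (by positivity)
  have habs1 : |t' * t' - s' * s'| ≤ 1 := by
    rw [hss, htt]
    rw [abs_le]
    constructor <;> linarith
  have hxa := norm_nonneg (ξ (A, B))
  have hya := norm_nonneg (ξ (insert l A, insert l B))
  calc 2 * ε * ‖ξ (A, B)‖ ≤ |2 * s' * t'| * ‖ξ (A, B)‖ := by
        rw [abs_of_nonneg (by positivity)]
        nlinarith
  _ = |t' * t' - s' * s'| * ‖ξ (insert l A, insert l B)‖ := by rw [abs_mul, abs_mul]; exact habs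
  _ ≤ ‖ξ (insert l A, insert l B)‖ := by nlinarith

include hε hlam ha hb hG hξ in
lemma Zparity (A B : Finset ℤ) (hpar : (A.card + B.card) % 2 = 1) : ξ (A, B) = 0 := by
  by_contra hx
  have habs : 0 < ‖ξ (A, B)‖ := norm_pos_iff.mpr hx
  set δ : ℝ := 2 * ε * ‖ξ (A, B)‖ with hδdef
  have hδ : 0 < δ := mul_pos (mul_pos two_pos hε.1) habs
  have hsum : Summable (fun p : Finset ℤ × Finset ℤ => ‖ξ p‖ ^ (2:ℝ)) :=
    (lp.memℓp ξ).summable (by norm_num)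
  have hev : ∀ᶠ p in Filter.cofinite, ‖ξ p‖ ^ (2:ℝ) < δ ^ (2:ℝ) :=
    hsum.tendsto_cofinite_zero.eventually (gt_mem_nhds (Real.rpow_pos_of_pos hδ 2))
  have hfin : {p : Finset ℤ × Finset ℤ | δ ^ (2:ℝ) ≤ ‖ξ p‖ ^ (2:ℝ)}.Finite :=
    (Filter.eventually_cofinite.mp hev).subset (fun p hp => not_lt.2 hp)
  set L : Set ℤ := {l | 0 ≤ l ∧ l ∉ A ∧ l ∉ B} with hLdef
  have hLinf : L.Infinite := by
    have h1 : (Set.Ici (0:ℤ) \ (↑A ∪ ↑B)).Infinite :=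
      Set.Infinite.diff (Set.Ici_infinite 0) ((A.finite_toSet).union (B.finite_toSet))
    have h2 : Set.Ici (0:ℤ) \ (↑A ∪ ↑B) = L := by
      ext l
      simp only [hLdef, Set.mem_diff, Set.mem_Ici, Set.mem_union, Set.mem_setOf_eq,
        Finset.mem_coe, not_or]
    rwa [h2] at h1
  set f : ℤ → Finset ℤ × Finset ℤ := fun l => (insert l A, insert l B) with hfdef
  have hmaps : ∀ l ∈ L, f l ∈ {p : Finset ℤ × Finset ℤ | δ ^ (2:ℝ) ≤ ‖ξ p‖ ^ (2:ℝ)} := by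
    rintro l ⟨hl0, hlA, hlB⟩
    have := RelIneq hε hlam ha hb hG hξ l hl0 A B hlA hlB hpar
    have hle : δ ≤ ‖ξ (f l)‖ := by
      exact this
    exact Real.rpow_le_rpow hδ.le hle (by norm_num)
  have hinj : Set.InjOn f L := by
    rintro l ⟨_, hlA, _⟩ l' ⟨_, hl'A, _⟩ h
    have h1 : insert l A = insert l' A := (Prod.mk.injEq _ _ _ _ ▸ h).1
    have h2 : l ∈ insert l' A := h1 ▸ Finset.mem_insert_self l A
    rcases Finset.mem_insert.mp h2 with h3 | h3
    · exact h3
    · exact absurd h3 hlA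
  exact hLinf (Set.Finite.of_finite_image (hfin.subset (Set.image_subset_iff.2 hmaps)) hinj)

include hε hlam ha hb hG hξ in
lemma vanish (A B : Finset ℤ)
    (hnot : ¬((∀ n ∈ A, n < 0) ∧ (∀ n ∈ B, n < 0) ∧ A.card % 2 = B.card % 2)) :
    ξ (A, B) = 0 := by
  by_cases hpar : A.card % 2 = B.card % 2
  · by_cases hA : ∀ n ∈ A, n < 0
    · by_cases hB : ∀ n ∈ B, n < 0
      · exact absurd ⟨hA, hB, hpar⟩ hnot
      · push_neg at hB
        obtain ⟨n, hnB, hn0⟩ := hB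
        have hn0 : 0 ≤ n := by omega
        by_cases hnA : n ∈ A
        · have hcard : ((A.erase n).card + (B.erase n).card) % 2 = 0 := by
            have h1 := Finset.card_erase_of_mem hnA
            have h2 := Finset.card_erase_of_mem hnB
            have h3 := Finset.card_pos.2 ⟨n, hnA⟩
            have h4 := Finset.card_pos.2 ⟨n, hnB⟩
            omega
          have := Z3 hε hlam ha hb hG hξ n hn0 (A.erase n) (B.erase n)
            (Finset.notMem_erase n A) (Finset.notMem_erase n B) hcard
          rwa [Finset.insert_erase hnA, Finset.insert_erase hnB] at this
        · have := Z2 hε hlam ha hb hG hξ n hn0 A (B.erase n) hnA (Finset.notMem_erase n B)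
          rwa [Finset.insert_erase hnB] at this
    · push_neg at hA
      obtain ⟨n, hnA, hn0⟩ := hA
      have hn0 : 0 ≤ n := by omega
      by_cases hnB : n ∈ B
      · have hcard : ((A.erase n).card + (B.erase n).card) % 2 = 0 := by
          have h1 := Finset.card_erase_of_mem hnA
          have h2 := Finset.card_erase_of_mem hnB
          have h3 := Finset.card_pos.2 ⟨n, hnA⟩
          have h4 := Finset.card_pos.2 ⟨n, hnB⟩
          omega
        have := Z3 hε hlam ha hb hG hξ n hn0 (A.erase n) (B.erase n)
          (Finset.notMem_erase n A) (Finset.notMem_erase n B) hcard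
        rwa [Finset.insert_erase hnA, Finset.insert_erase hnB] at this
      · have := Z1 hε hlam ha hb hG hξ n hn0 (A.erase n) B (Finset.notMem_erase n A) hnB
        rwa [Finset.insert_erase hnA] at this
  · exact Zparity hε hlam ha hb hG hξ A B (by omega)

end main

end CARAux

/-- with past `P = {n < 0}` and future `F = {n ≥ 0}`, assume
`ε ≤ λ_l ≤ 1−ε`, `λ_l ≠ 1/2` for all `l`, with `0 < ε < 1/2`. If `ξ ∈ H` satisfies the
`l`-th intertwining equations for every `l ∈ F`, then `ξ` belongs to the closed linear
span of `{e_{(A,B)} : A, B ⊆ P finite, card A ≡ card B (mod 2)}`. -/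
theorem stmt16 (lam : ℤ → ℝ) (ε : ℝ) (hε : 0 < ε ∧ ε < 1 / 2)
    (hlam : ∀ l : ℤ, ε ≤ lam l ∧ lam l ≤ 1 - ε ∧ lam l ≠ 1 / 2)
    (a b : ℤ → CARSpace →L[ℂ] CARSpace) (G : CARSpace →L[ℂ] CARSpace)
    (ha : IsCAR_a lam a) (hb : IsCAR_b lam b) (hG : IsCAR_G G)
    (ξ : CARSpace) (hξ : ∀ l : ℤ, 0 ≤ l → IntertwinesAt lam a b G l ξ) :
    ξ ∈ pastSpan := by
  classical
  have hs : HasSum (fun p : Finset ℤ × Finset ℤ => lp.single 2 p (ξ p)) ξ :=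
    lp.hasSum_single ENNReal.ofNat_ne_top ξ
  refine mem_closure_of_tendsto hs (Filter.Eventually.of_forall (fun s => ?_))
  apply Submodule.sum_mem
  intro p _
  by_cases hp : ξ p = 0
  · rw [hp]
    have : (lp.single 2 p (0 : ℂ) : CARSpace) = 0 := by
      apply lp.ext
      funext q
      rcases eq_or_ne q p with rfl | h
      · simp [lp.single_apply_self]
      · simp [lp.single_apply_ne _ _ _ h]
    rw [this]
    exact Submodule.zero_mem _
  · obtain ⟨A, B⟩ := p
    have hcond : (∀ n ∈ A, n < 0) ∧ (∀ n ∈ B, n < 0) ∧ A.card % 2 = B.card % 2 := by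
      by_contra hc
      exact hp (vanish hε hlam ha hb hG hξ A B hc)
    have heq : lp.single 2 ((A, B) : Finset ℤ × Finset ℤ) (ξ (A, B)) = ξ (A, B) • carE (A, B) := by
      rw [carE, ← lp.single_smul, smul_eq_mul, mul_one]
    rw [heq]
    exact Submodule.smul_mem _ _ (Submodule.subset_span ⟨A, B, hcond.1, hcond.2.1, hcond.2.2, rfl⟩)

end
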